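/- (Proposition 4.2.) Let 0 < α < 1, C > 0, r > 0, n ∈ ℕ with n ≥ 1, and let g : (0,∞) → [0,∞) be measurable. Then for every t > 0, with t_n := t, ∫_{t < t_{n−1} < t_{n−2} < ⋯ < t₀ < ∞} r^{[n]} g(t) ∏_{i=0}^{n−1} Cα (t_i − t_{i+1})^{−α} t_i^{−1} dt₀ ⋯ dt_{n−1} = L_n t^{−nα} g(t), where r^{[n]} := r(r+1)⋯(r+n−1) and L_n := r^{[n]} (C Γ(1−α))^n Γ(nα + 1)/Γ(n + 1). Equivalently, ∫_{t < t_{n−1} < ⋯ < t₀ < ∞} ∏_{i=0}^{n−1} (t_i − t_{i+1})^{−α} t_i^{−1} dt₀ ⋯ dt_{n−1} = (Γ(1−α)^n Γ(nα+1) / (α^n Γ(n+1))) t^{−nα}. -/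

import Mathlib

open MeasureTheory Set Finset

/-- Extend a vector `s = (t₀, …, t_{n-1})` by setting `t_n = t` (and `t` beyond). -/
noncomputable def tExt (n : ℕ) (t : ℝ) (s : Fin n → ℝ) (i : ℕ) : ℝ :=
  if h : i < n then s ⟨i, h⟩ else t

open scoped ENNReal
section AuxProof

lemma betaReal (a b : ℝ) (ha : 0 < a) (hb : 0 < b) :
    ∫ x in (0:ℝ)..1, x ^ (a - 1) * (1 - x) ^ (b - 1)
      = Real.Gamma a * Real.Gamma b / Real.Gamma (a + b) := by
  have key : Complex.betaIntegral a b
      = ((∫ x in (0:ℝ)..1, x ^ (a - 1) * (1 - x) ^ (b - 1) : ℝ) : ℂ) := by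
    rw [Complex.betaIntegral, ← intervalIntegral.integral_ofReal]
    refine intervalIntegral.integral_congr fun x hx => ?_
    rw [Set.uIcc_of_le (by norm_num : (0:ℝ) ≤ 1)] at hx
    rw [show ((a:ℂ)-1) = ((a-1:ℝ):ℂ) by push_cast; ring,
      show ((b:ℂ)-1) = ((b-1:ℝ):ℂ) by push_cast; ring,
      show (1 - (x:ℂ)) = ((1-x:ℝ):ℂ) by push_cast; ring,
      ← Complex.ofReal_cpow hx.1, ← Complex.ofReal_cpow (by linarith [hx.2])]
    push_cast
    ring
  have h := Complex.Gamma_mul_Gamma_eq_betaIntegral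
      (s := (a:ℂ)) (t := (b:ℂ)) (by simpa using ha) (by simpa using hb)
  rw [key] at h
  have hab : ((a:ℂ) + b) = ((a + b : ℝ) : ℂ) := by push_cast; ring
  rw [hab, Complex.Gamma_ofReal, Complex.Gamma_ofReal, Complex.Gamma_ofReal] at h
  have h2 : Real.Gamma a * Real.Gamma b
      = Real.Gamma (a + b) * ∫ x in (0:ℝ)..1, x ^ (a - 1) * (1 - x) ^ (b - 1) := by
    exact_mod_cast h
  have hG : Real.Gamma (a + b) ≠ 0 := (Real.Gamma_pos_of_pos (by linarith)).ne'
  field_simp [hG] at h2 ⊢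
  linarith [h2]

lemma betaIntegrable (a b : ℝ) (ha : 0 < a) (hb : 0 < b) :
    IntegrableOn (fun x : ℝ => x ^ (a - 1) * (1 - x) ^ (b - 1)) (Set.Ioo 0 1) := by
  have hc := Complex.betaIntegral_convergent (u := (a:ℂ)) (v := (b:ℂ))
      (by simpa using ha) (by simpa using hb)
  have hc' : IntegrableOn (fun x : ℝ => (x:ℂ) ^ ((a:ℂ) - 1) * (1 - (x:ℂ)) ^ ((b:ℂ) - 1))
      (Set.Ioo 0 1) := (hc.1.mono_set Set.Ioo_subset_Ioc_self)
  have hre := hc'.re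
  refine (IntegrableOn.congr_fun hre ?_ measurableSet_Ioo)
  intro x hx
  simp only [Function.comp]
  have h1 : ((x:ℂ) ^ ((a:ℂ) - 1) * (1 - (x:ℂ)) ^ ((b:ℂ) - 1))
      = ((x ^ (a - 1) * (1 - x) ^ (b - 1) : ℝ) : ℂ) := by
    rw [show ((a:ℂ)-1) = ((a-1:ℝ):ℂ) by push_cast; ring,
      show ((b:ℂ)-1) = ((b-1:ℝ):ℂ) by push_cast; ring,
      show (1 - (x:ℂ)) = ((1-x:ℝ):ℂ) by push_cast; ring,
      ← Complex.ofReal_cpow hx.1.le, ← Complex.ofReal_cpow (by linarith [hx.2])]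
    push_cast; ring
  show (((x:ℂ) ^ ((a:ℂ) - 1) * (1 - (x:ℂ)) ^ ((b:ℂ) - 1)).re) = _
  rw [h1, Complex.ofReal_re]

-- algebraic identity for the change of variables
lemma auxAlg (s u α β : ℝ) (hs : 0 < s) (hu : 0 < u) (hu1 : u < 1) :
    (s / u ^ 2) * ((s / u - s) ^ (-α) * (s / u) ^ (-β) * (s / u)⁻¹)
      = u ^ (α + β - 1) * (1 - u) ^ (-α) * s ^ (-(α + β)) := by
  have h1u : (0:ℝ) < 1 - u := by linarith
  have h1 : s / u - s = s * (1 - u) / u := by field_simp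
  have e1 : (s / u - s) ^ (-α) = (s ^ α * (1 - u) ^ α / u ^ α)⁻¹ := by
    rw [h1, Real.rpow_neg (by positivity), Real.div_rpow (by positivity) hu.le,
      Real.mul_rpow hs.le h1u.le]
  have e2 : (s / u) ^ (-β) = (s ^ β / u ^ β)⁻¹ := by
    rw [Real.rpow_neg (by positivity), Real.div_rpow hs.le hu.le]
  have e3 : u ^ (α + β - 1) = u ^ α * u ^ β / u := by
    rw [Real.rpow_sub hu, Real.rpow_add hu, Real.rpow_one]
  have e4 : (1 - u) ^ (-α) = ((1 - u) ^ α)⁻¹ := Real.rpow_neg h1u.le _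
  have e5 : s ^ (-(α + β)) = (s ^ α * s ^ β)⁻¹ := by
    rw [Real.rpow_neg hs.le, Real.rpow_add hs]
  rw [e1, e2, e3, e4, e5]
  have p1 : (0:ℝ) < s ^ α := Real.rpow_pos_of_pos hs _
  have p2 : (0:ℝ) < s ^ β := Real.rpow_pos_of_pos hs _
  have p3 : (0:ℝ) < u ^ α := Real.rpow_pos_of_pos hu _
  have p4 : (0:ℝ) < u ^ β := Real.rpow_pos_of_pos hu _
  have p5 : (0:ℝ) < (1 - u) ^ α := Real.rpow_pos_of_pos h1u _
  field_simp

lemma image_div_Ioo (s : ℝ) (hs : 0 < s) :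
    (fun u : ℝ => s / u) '' Set.Ioo 0 1 = Set.Ioi s := by
  ext x
  constructor
  · rintro ⟨u, ⟨hu0, hu1⟩, rfl⟩
    have : s < s / u := by
      rw [lt_div_iff₀ hu0]; nlinarith
    simpa using this
  · intro hx
    simp only [Set.mem_Ioi] at hx
    have hx0 : 0 < x := hs.trans hx
    exact ⟨s / x, ⟨by positivity, (div_lt_one hx0).2 hx⟩, by field_simp⟩

lemma oneD (α β s : ℝ) (hα : 0 < α) (hα1 : α < 1) (hβ : 0 ≤ β) (hs : 0 < s) :
    ∫⁻ x in Set.Ioi s, ENNReal.ofReal ((x - s) ^ (-α) * x ^ (-β) * x⁻¹)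
      = ENNReal.ofReal ((Real.Gamma (α + β) * Real.Gamma (1 - α) / Real.Gamma (β + 1))
          * s ^ (-(α + β))) := by
  have hinj : Set.InjOn (fun u : ℝ => s / u) (Set.Ioo 0 1) := by
    intro a ha b hb hab
    simp only at hab
    field_simp [ne_of_gt ha.1, ne_of_gt hb.1] at hab
    exact hab.symm
  have hderiv : ∀ u ∈ Set.Ioo (0:ℝ) 1,
      HasFDerivWithinAt (fun u : ℝ => s / u)
        ((1 : ℝ →L[ℝ] ℝ).smulRight (-(s / u ^ 2))) (Set.Ioo 0 1) u := by
    intro u hu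
    have h : HasDerivAt (fun u : ℝ => s / u) (-(s / u ^ 2)) u := by
      simpa [div_eq_mul_inv, mul_comm] using ((hasDerivAt_inv (ne_of_gt hu.1)).const_mul s)
    exact h.hasDerivWithinAt.hasFDerivWithinAt
  have himg := image_div_Ioo s hs
  rw [← himg, lintegral_image_eq_lintegral_abs_det_fderiv_mul volume measurableSet_Ioo
      hderiv hinj]
  have hcongr : ∫⁻ u in Set.Ioo (0:ℝ) 1,
      ENNReal.ofReal |((1 : ℝ →L[ℝ] ℝ).smulRight (-(s / u ^ 2))).det|
        * ENNReal.ofReal ((s / u - s) ^ (-α) * (s / u) ^ (-β) * (s / u)⁻¹)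
      = ∫⁻ u in Set.Ioo (0:ℝ) 1,
      ENNReal.ofReal (u ^ ((α + β) - 1) * (1 - u) ^ ((1 - α) - 1) * s ^ (-(α + β))) := by
    refine setLIntegral_congr_fun measurableSet_Ioo (fun u hu => ?_)
    rw [ContinuousLinearMap.smulRight_one_eq_toSpanSingleton, ContinuousLinearMap.det_toSpanSingleton, abs_neg, abs_of_pos (div_pos hs (pow_pos hu.1 2)),
      ← ENNReal.ofReal_mul (by positivity)]
    congr 1
    have := auxAlg s u α β hs hu.1 hu.2
    rw [this]
    ring_nf
  rw [hcongr]
  have hpt : ∀ u : ℝ, ENNReal.ofReal (u ^ ((α + β) - 1) * (1 - u) ^ ((1 - α) - 1) * s ^ (-(α + β)))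
      = ENNReal.ofReal (u ^ ((α + β) - 1) * (1 - u) ^ ((1 - α) - 1)) * ENNReal.ofReal (s ^ (-(α + β))) := by
    intro u
    rw [← ENNReal.ofReal_mul']
    positivity
  simp_rw [hpt]
  rw [lintegral_mul_const _ ((by fun_prop : Measurable fun u : ℝ => u ^ ((α + β) - 1) * (1 - u) ^ ((1 - α) - 1)).ennreal_ofReal)]
  have hbint := betaIntegrable (α + β) (1 - α) (by linarith) (by linarith)
  have hval : ∫⁻ u in Set.Ioo (0:ℝ) 1, ENNReal.ofReal (u ^ ((α + β) - 1) * (1 - u) ^ ((1 - α) - 1))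
      = ENNReal.ofReal (Real.Gamma (α + β) * Real.Gamma (1 - α) / Real.Gamma (β + 1)) := by
    rw [← ofReal_integral_eq_lintegral_ofReal hbint
      ((ae_restrict_iff' measurableSet_Ioo).2 (ae_of_all _ fun u hu =>
        mul_nonneg (Real.rpow_nonneg hu.1.le _) (Real.rpow_nonneg (by linarith [hu.2]) _)))]
    · congr 1
      have := betaReal (α + β) (1 - α) (by linarith) (by linarith)
      rw [intervalIntegral.integral_of_le (by norm_num : (0:ℝ) ≤ 1),
        ← integral_Ioc_eq_integral_Ioo] at *
      rw [this]
      congr 2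
      ring
  rw [hval, ← ENNReal.ofReal_mul' (by positivity)]
lemma measurable_tExt (n : ℕ) (t : ℝ) (i : ℕ) :
    Measurable fun s : Fin n → ℝ => tExt n t s i := by
  unfold tExt
  by_cases h : i < n
  · simpa [h] using measurable_pi_apply (⟨i, h⟩ : Fin n)
  · simpa [h] using measurable_const

lemma tExt_of_ge (n : ℕ) (t : ℝ) (s : Fin n → ℝ) {i : ℕ} (h : n ≤ i) :
    tExt n t s i = t := dif_neg (not_lt.2 h)

lemma measurableSet_reg (n : ℕ) (t : ℝ) :
    MeasurableSet {s : Fin n → ℝ | ∀ i < n, tExt n t s (i + 1) < tExt n t s i} := by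
  have : {s : Fin n → ℝ | ∀ i < n, tExt n t s (i + 1) < tExt n t s i}
      = ⋂ (i : ℕ) (_ : i < n), {s | tExt n t s (i + 1) < tExt n t s i} := by
    ext s; simp [Set.mem_iInter]
  rw [this]
  exact MeasurableSet.iInter fun i => MeasurableSet.iInter fun _ =>
    measurableSet_lt (measurable_tExt n t (i + 1)) (measurable_tExt n t i)

lemma measurable_prodF (n : ℕ) (t α : ℝ) :
    Measurable fun s : Fin n → ℝ =>
      ∏ i ∈ Finset.range n, (tExt n t s i - tExt n t s (i + 1)) ^ (-α) * (tExt n t s i)⁻¹ := by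
  refine Finset.measurable_prod _ fun i _ => ?_
  have hr : Measurable fun x : ℝ => x ^ (-α) := by fun_prop
  exact (hr.comp ((measurable_tExt n t i).sub (measurable_tExt n t (i + 1)))).mul
    (measurable_tExt n t i).inv

lemma reg_ge (n : ℕ) (t : ℝ) (s : Fin n → ℝ)
    (hs : ∀ i < n, tExt n t s (i + 1) < tExt n t s i) (j : ℕ) :
    t ≤ tExt n t s j := by
  rcases le_or_gt n j with h | h
  · rw [tExt_of_ge n t s h]
  · -- j < n, prove by descending induction via n - k
    have key : ∀ k, t ≤ tExt n t s (n - k) := by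
      intro k
      induction k with
      | zero => rw [tExt_of_ge n t s (by omega)]
      | succ m ih =>
        rcases le_or_gt n m with hm | hm
        · have he : n - (m + 1) = n - m := by omega
          rw [he]; exact ih
        · have h1 : n - (m + 1) < n := by omega
          have h2 : n - (m + 1) + 1 = n - m := by omega
          have := hs (n - (m + 1)) h1
          rw [h2] at this
          exact le_of_lt (lt_of_le_of_lt ih this)
    have : j = n - (n - j) := by omega
    rw [this]
    exact key (n - j)

lemma prodF_nonneg (n : ℕ) (t α : ℝ) (ht : 0 < t) (s : Fin n → ℝ)
    (hs : ∀ i < n, tExt n t s (i + 1) < tExt n t s i) :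
    0 ≤ ∏ i ∈ Finset.range n, (tExt n t s i - tExt n t s (i + 1)) ^ (-α) * (tExt n t s i)⁻¹ := by
  refine Finset.prod_nonneg fun i hi => ?_
  rw [Finset.mem_range] at hi
  have h1 : tExt n t s (i + 1) < tExt n t s i := hs i hi
  have h2 : t ≤ tExt n t s i := reg_ge n t s hs i
  exact mul_nonneg (Real.rpow_nonneg (by linarith) _) (inv_nonneg.2 (by linarith))

lemma tExt_insertNth (n : ℕ) (t x : ℝ) (y : Fin n → ℝ) (j : ℕ) (hj : j ≤ n) :
    tExt (n + 1) t ((Fin.last n).insertNth x y) j = tExt n x y j := by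
  rcases lt_or_eq_of_le hj with h | h
  · have hj1 : j < n + 1 := by omega
    rw [tExt, tExt, dif_pos hj1, dif_pos h]
    have : (⟨j, hj1⟩ : Fin (n + 1)) = Fin.castSucc ⟨j, h⟩ := rfl
    rw [this, ← Fin.succAbove_last, Fin.insertNth_apply_succAbove]
  · subst h
    rw [tExt, tExt, dif_pos (Nat.lt_succ_self j), dif_neg (lt_irrefl j)]
    have : (⟨j, Nat.lt_succ_self j⟩ : Fin (j + 1)) = Fin.last j := rfl
    rw [this, Fin.insertNth_apply_same]

lemma LKey (α : ℝ) (hα : 0 < α) (hα1 : α < 1) (n : ℕ) :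
    ∀ t : ℝ, 0 < t →
    (∫⁻ s in {s : Fin n → ℝ | ∀ i < n, tExt n t s (i + 1) < tExt n t s i},
        ENNReal.ofReal (∏ i ∈ Finset.range n,
          (tExt n t s i - tExt n t s (i + 1)) ^ (-α) * (tExt n t s i)⁻¹))
      = ENNReal.ofReal ((Real.Gamma (1 - α) ^ n * Real.Gamma (n * α + 1)
          / (α ^ n * Real.Gamma (n + 1))) * t ^ (-(n * α))) := by
  induction n with
  | zero =>
    intro t ht
    have h1 : {s : Fin 0 → ℝ | ∀ i < 0, tExt 0 t s (i + 1) < tExt 0 t s i} = Set.univ := by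
      ext s; simp
    rw [h1]
    simp only [Finset.range_zero, Finset.prod_empty, ENNReal.ofReal_one]
    rw [setLIntegral_one]
    have hv : (volume : Measure (Fin 0 → ℝ)) Set.univ = 1 := by
      rw [MeasureTheory.volume_pi, Measure.pi_univ]; simp
    rw [hv]
    norm_num [Real.Gamma_one, Real.rpow_zero]
  | succ n IH =>
    intro t ht
    set e := MeasurableEquiv.piFinSuccAbove (fun _ : Fin (n + 1) => ℝ) (Fin.last n) with he
    have mp : MeasurePreserving e.symm volume volume :=
      (volume_preserving_piFinSuccAbove (fun _ : Fin (n + 1) => ℝ) (Fin.last n)).symm e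
    have hsymm : ∀ z : ℝ × (Fin n → ℝ), e.symm z = (Fin.last n).insertNth z.1 z.2 :=
      fun z => rfl
    set F : (Fin (n + 1) → ℝ) → ℝ≥0∞ := fun s => ENNReal.ofReal (∏ i ∈ Finset.range (n + 1),
      (tExt (n + 1) t s i - tExt (n + 1) t s (i + 1)) ^ (-α) * (tExt (n + 1) t s i)⁻¹) with hF
    set Reg : Set (Fin (n + 1) → ℝ) :=
      {s | ∀ i < n + 1, tExt (n + 1) t s (i + 1) < tExt (n + 1) t s i} with hReg
    have h0 : (∫⁻ s in Reg, F s) = ∫⁻ z in e.symm ⁻¹' Reg, F (e.symm z) :=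
      (mp.setLIntegral_comp_preimage_emb e.symm.measurableEmbedding F Reg).symm
    -- pointwise product splitting
    have hfz : ∀ z : ℝ × (Fin n → ℝ),
        (∏ i ∈ Finset.range (n + 1), (tExt (n + 1) t (e.symm z) i
            - tExt (n + 1) t (e.symm z) (i + 1)) ^ (-α) * (tExt (n + 1) t (e.symm z) i)⁻¹)
          = (∏ i ∈ Finset.range n, (tExt n z.1 z.2 i - tExt n z.1 z.2 (i + 1)) ^ (-α)
              * (tExt n z.1 z.2 i)⁻¹) * ((z.1 - t) ^ (-α) * z.1⁻¹) := by
      intro z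
      rw [Finset.prod_range_succ]
      congr 1
      · refine Finset.prod_congr rfl fun i hi => ?_
        rw [Finset.mem_range] at hi
        rw [hsymm, tExt_insertNth n t z.1 z.2 i (by omega),
          tExt_insertNth n t z.1 z.2 (i + 1) (by omega)]
      · rw [hsymm, tExt_insertNth n t z.1 z.2 n le_rfl,
          tExt_of_ge (n + 1) t _ (le_refl (n + 1)), tExt_of_ge n z.1 z.2 (le_refl n)]
    -- description of the preimage region
    have hS : e.symm ⁻¹' Reg = {z : ℝ × (Fin n → ℝ) |
        t < z.1 ∧ ∀ i < n, tExt n z.1 z.2 (i + 1) < tExt n z.1 z.2 i} := by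
      ext z
      simp only [Set.mem_preimage, hReg, Set.mem_setOf_eq, hsymm]
      constructor
      · intro h
        refine ⟨?_, fun i hi => ?_⟩
        · have := h n (Nat.lt_succ_self n)
          rwa [tExt_of_ge (n + 1) t _ (le_refl (n + 1)),
            tExt_insertNth n t z.1 z.2 n le_rfl, tExt_of_ge n z.1 z.2 (le_refl n)] at this
        · have := h i (by omega)
          rwa [tExt_insertNth n t z.1 z.2 (i + 1) (by omega),
            tExt_insertNth n t z.1 z.2 i (by omega)] at this
      · rintro ⟨h1, h2⟩ i hi
        rcases Nat.lt_or_ge i n with h | h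
        · rw [tExt_insertNth n t z.1 z.2 (i + 1) (by omega),
            tExt_insertNth n t z.1 z.2 i (by omega)]
          exact h2 i h
        · have hin : i = n := by omega
          subst hin
          rw [tExt_of_ge (i + 1) t _ (le_refl (i + 1)),
            tExt_insertNth i t z.1 z.2 i le_rfl, tExt_of_ge i z.1 z.2 (le_refl i)]
          exact h1
    rw [h0, hS]
    -- measurability of tExt in the pair variable
    have meas_tExt2 : ∀ i : ℕ, Measurable fun z : ℝ × (Fin n → ℝ) => tExt n z.1 z.2 i := by
      intro i
      unfold tExt
      by_cases h : i < n
      · simp only [dif_pos h]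
        exact (measurable_pi_apply (⟨i, h⟩ : Fin n)).comp measurable_snd
      · simpa [h] using measurable_fst
    have hrm : Measurable fun x : ℝ => x ^ (-α) := by fun_prop
    have measP : Measurable fun z : ℝ × (Fin n → ℝ) =>
        ∏ i ∈ Finset.range n, (tExt n z.1 z.2 i - tExt n z.1 z.2 (i + 1)) ^ (-α)
          * (tExt n z.1 z.2 i)⁻¹ := by
      refine Finset.measurable_prod _ fun i _ => ?_
      exact (hrm.comp ((meas_tExt2 i).sub (meas_tExt2 (i + 1)))).mul (meas_tExt2 i).inv
    have measQ : Measurable fun z : ℝ × (Fin n → ℝ) => (z.1 - t) ^ (-α) * z.1⁻¹ := by fun_prop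
    have hSmeas : MeasurableSet {z : ℝ × (Fin n → ℝ) |
        t < z.1 ∧ ∀ i < n, tExt n z.1 z.2 (i + 1) < tExt n z.1 z.2 i} := by
      have h1 : {z : ℝ × (Fin n → ℝ) |
          t < z.1 ∧ ∀ i < n, tExt n z.1 z.2 (i + 1) < tExt n z.1 z.2 i}
          = {z : ℝ × (Fin n → ℝ) | t < z.1} ∩
            ⋂ (i : ℕ) (_ : i < n), {z : ℝ × (Fin n → ℝ) |
              tExt n z.1 z.2 (i + 1) < tExt n z.1 z.2 i} := by
        ext z; simp [Set.mem_iInter]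
      rw [h1]
      exact (measurableSet_lt measurable_const measurable_fst).inter
        (MeasurableSet.iInter fun i => MeasurableSet.iInter fun _ =>
          measurableSet_lt (meas_tExt2 (i + 1)) (meas_tExt2 i))
    -- rewrite integrand
    have hFcongr : (∫⁻ z in {z : ℝ × (Fin n → ℝ) |
          t < z.1 ∧ ∀ i < n, tExt n z.1 z.2 (i + 1) < tExt n z.1 z.2 i}, F (e.symm z))
        = ∫⁻ z in {z : ℝ × (Fin n → ℝ) |
          t < z.1 ∧ ∀ i < n, tExt n z.1 z.2 (i + 1) < tExt n z.1 z.2 i},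
          ENNReal.ofReal ((∏ i ∈ Finset.range n, (tExt n z.1 z.2 i
            - tExt n z.1 z.2 (i + 1)) ^ (-α) * (tExt n z.1 z.2 i)⁻¹)
            * ((z.1 - t) ^ (-α) * z.1⁻¹)) := by
      refine setLIntegral_congr_fun hSmeas (fun z hz => ?_)
      rw [hF]
      simp only
      rw [hfz z]
    rw [hFcongr]
    -- Tonelli
    set G : ℝ × (Fin n → ℝ) → ℝ≥0∞ := fun z =>
      ENNReal.ofReal ((∏ i ∈ Finset.range n, (tExt n z.1 z.2 i
        - tExt n z.1 z.2 (i + 1)) ^ (-α) * (tExt n z.1 z.2 i)⁻¹)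
        * ((z.1 - t) ^ (-α) * z.1⁻¹)) with hG
    have measG : Measurable G := ((measP.mul measQ)).ennreal_ofReal
    rw [← lintegral_indicator hSmeas]
    rw [Measure.volume_eq_prod, lintegral_prod _ ((measG.indicator hSmeas).aemeasurable)]
    -- inner integral
    have cn_nonneg : 0 ≤ Real.Gamma (1 - α) ^ n * Real.Gamma (n * α + 1)
        / (α ^ n * Real.Gamma (n + 1)) := by
      have g1 : 0 < Real.Gamma (1 - α) := Real.Gamma_pos_of_pos (by linarith)
      have g2 : 0 < Real.Gamma ((n : ℝ) * α + 1) := Real.Gamma_pos_of_pos (by positivity)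
      have g3 : 0 < Real.Gamma ((n : ℝ) + 1) := Real.Gamma_pos_of_pos (by positivity)
      positivity
    have hinner : ∀ x : ℝ, (∫⁻ y, Set.indicator {z : ℝ × (Fin n → ℝ) |
          t < z.1 ∧ ∀ i < n, tExt n z.1 z.2 (i + 1) < tExt n z.1 z.2 i} G (x, y))
        = Set.indicator (Set.Ioi t) (fun x => ENNReal.ofReal ((Real.Gamma (1 - α) ^ n
            * Real.Gamma (n * α + 1) / (α ^ n * Real.Gamma (n + 1))) * x ^ (-(n * α)))
            * ENNReal.ofReal ((x - t) ^ (-α) * x⁻¹)) x := by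
      intro x
      by_cases hx : t < x
      · have hx0 : 0 < x := ht.trans hx
        have hindy : ∀ y : Fin n → ℝ, Set.indicator {z : ℝ × (Fin n → ℝ) |
            t < z.1 ∧ ∀ i < n, tExt n z.1 z.2 (i + 1) < tExt n z.1 z.2 i} G (x, y)
            = Set.indicator {y : Fin n → ℝ | ∀ i < n, tExt n x y (i + 1) < tExt n x y i}
              (fun y => G (x, y)) y := by
          intro y
          simp only [Set.indicator_apply, Set.mem_setOf_eq, hx, true_and]
        rw [lintegral_congr hindy, lintegral_indicator (measurableSet_reg n x)]
        have hsplit : (∫⁻ y in {y : Fin n → ℝ | ∀ i < n, tExt n x y (i + 1) < tExt n x y i},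
            G (x, y))
            = ∫⁻ y in {y : Fin n → ℝ | ∀ i < n, tExt n x y (i + 1) < tExt n x y i},
              ENNReal.ofReal (∏ i ∈ Finset.range n, (tExt n x y i
                - tExt n x y (i + 1)) ^ (-α) * (tExt n x y i)⁻¹)
                * ENNReal.ofReal ((x - t) ^ (-α) * x⁻¹) := by
          refine setLIntegral_congr_fun (measurableSet_reg n x) (fun y hy => ?_)
          rw [hG]
          simp only
          rw [ENNReal.ofReal_mul (prodF_nonneg n x α hx0 y hy)]
        rw [hsplit, lintegral_mul_const _ ((measurable_prodF n x α).ennreal_ofReal), IH x hx0,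
          Set.indicator_of_mem (Set.mem_Ioi.2 hx)]
      · have hindy : ∀ y : Fin n → ℝ, Set.indicator {z : ℝ × (Fin n → ℝ) |
            t < z.1 ∧ ∀ i < n, tExt n z.1 z.2 (i + 1) < tExt n z.1 z.2 i} G (x, y) = 0 := by
          intro y
          refine Set.indicator_of_notMem ?_ _
          simp only [Set.mem_setOf_eq, not_and]
          intro h; exact absurd h hx
        rw [lintegral_congr hindy, lintegral_zero,
          Set.indicator_of_notMem (by simpa using hx)]
    rw [lintegral_congr hinner, lintegral_indicator measurableSet_Ioi]
    -- outer integral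
    have houter : (∫⁻ x in Set.Ioi t, ENNReal.ofReal ((Real.Gamma (1 - α) ^ n
          * Real.Gamma (n * α + 1) / (α ^ n * Real.Gamma (n + 1))) * x ^ (-(n * α)))
          * ENNReal.ofReal ((x - t) ^ (-α) * x⁻¹))
        = ∫⁻ x in Set.Ioi t, ENNReal.ofReal (Real.Gamma (1 - α) ^ n
            * Real.Gamma (n * α + 1) / (α ^ n * Real.Gamma (n + 1)))
            * ENNReal.ofReal ((x - t) ^ (-α) * x ^ (-((n : ℝ) * α)) * x⁻¹) := by
      refine setLIntegral_congr_fun measurableSet_Ioi (fun x hx => ?_)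
      have hx0 : 0 < x := ht.trans hx
      rw [ENNReal.ofReal_mul' (Real.rpow_nonneg hx0.le _), mul_assoc]
      congr 1
      rw [← ENNReal.ofReal_mul (Real.rpow_nonneg hx0.le _)]
      congr 1
      ring
    rw [houter, lintegral_const_mul _ (by fun_prop :
        Measurable fun x : ℝ => ENNReal.ofReal ((x - t) ^ (-α) * x ^ (-((n : ℝ) * α)) * x⁻¹)),
      oneD α ((n : ℝ) * α) t hα hα1 (by positivity) ht,
      ← ENNReal.ofReal_mul cn_nonneg]
    congr 1
    -- the Gamma constant identity
    have hαn1 : ((n : ℝ) + 1) * α ≠ 0 := by positivity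
    have hG1 : Real.Gamma (((n : ℝ) + 1) * α + 1)
        = ((n : ℝ) + 1) * α * Real.Gamma (((n : ℝ) + 1) * α) := Real.Gamma_add_one hαn1
    have hG2 : Real.Gamma ((n : ℝ) + 1 + 1) = ((n : ℝ) + 1) * Real.Gamma ((n : ℝ) + 1) :=
      Real.Gamma_add_one (by positivity)
    have hGn1 : Real.Gamma ((n : ℝ) + 1) ≠ 0 := (Real.Gamma_pos_of_pos (by positivity)).ne'
    have hGna : Real.Gamma ((n : ℝ) * α + 1) ≠ 0 := (Real.Gamma_pos_of_pos (by positivity)).ne'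
    have hcast : ((n + 1 : ℕ) : ℝ) = (n : ℝ) + 1 := by push_cast; ring
    rw [hcast]
    have hexp : t ^ (-(α + (n : ℝ) * α)) = t ^ (-(((n : ℝ) + 1) * α)) := by
      congr 1; ring
    have hb : α + (n : ℝ) * α = ((n : ℝ) + 1) * α := by ring
    rw [hexp, hb, hG1, hG2]
    have hαne : α ≠ 0 := hα.ne'
    field_simp
    ring

end AuxProof

/-- Proposition 4.2: integrating the joint density of the remaining sums over the region
`t < t_{n-1} < ⋯ < t₀ < ∞` gives the marginal density `L_n t^{-nα} g(t)`; equivalently the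
purely analytic integral identity for `∏ (t_i - t_{i+1})^{-α} t_i^{-1}`. -/
theorem marginal_density_remaining_sum_stable
    (α C r : ℝ) (hα : 0 < α) (hα1 : α < 1) (hC : 0 < C) (hr : 0 < r)
    (n : ℕ) (hn : 1 ≤ n)
    (g : ℝ → ℝ) (hg_meas : Measurable g) (hg_nonneg : ∀ x > (0 : ℝ), 0 ≤ g x)
    (t : ℝ) (ht : 0 < t) :
    (∫ s in {s : Fin n → ℝ | ∀ i < n, tExt n t s (i + 1) < tExt n t s i},
        (∏ i ∈ Finset.range n, (r + i)) * g t *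
          ∏ i ∈ Finset.range n,
            C * α * (tExt n t s i - tExt n t s (i + 1)) ^ (-α) * (tExt n t s i)⁻¹)
      = (∏ i ∈ Finset.range n, (r + i)) * (C * Real.Gamma (1 - α)) ^ n
          * (Real.Gamma (n * α + 1) / Real.Gamma (n + 1)) * t ^ (-(n * α)) * g t
    ∧
    (∫ s in {s : Fin n → ℝ | ∀ i < n, tExt n t s (i + 1) < tExt n t s i},
        ∏ i ∈ Finset.range n,
          (tExt n t s i - tExt n t s (i + 1)) ^ (-α) * (tExt n t s i)⁻¹)
      = (Real.Gamma (1 - α) ^ n * Real.Gamma (n * α + 1) / (α ^ n * Real.Gamma (n + 1)))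
          * t ^ (-(n * α)) := by
  have g1 : 0 < Real.Gamma (1 - α) := Real.Gamma_pos_of_pos (by linarith)
  have g2 : 0 < Real.Gamma ((n : ℝ) * α + 1) := Real.Gamma_pos_of_pos (by positivity)
  have g3 : 0 < Real.Gamma ((n : ℝ) + 1) := Real.Gamma_pos_of_pos (by positivity)
  have hnn : 0 ≤ (Real.Gamma (1 - α) ^ n * Real.Gamma ((n : ℝ) * α + 1)
      / (α ^ n * Real.Gamma ((n : ℝ) + 1))) * t ^ (-((n : ℝ) * α)) := by positivity
  have hsecond : (∫ s in {s : Fin n → ℝ | ∀ i < n, tExt n t s (i + 1) < tExt n t s i},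
        ∏ i ∈ Finset.range n,
          (tExt n t s i - tExt n t s (i + 1)) ^ (-α) * (tExt n t s i)⁻¹)
      = (Real.Gamma (1 - α) ^ n * Real.Gamma (n * α + 1) / (α ^ n * Real.Gamma (n + 1)))
          * t ^ (-(n * α)) := by
    rw [integral_eq_lintegral_of_nonneg_ae
      ((ae_restrict_iff' (measurableSet_reg n t)).2
        (ae_of_all _ fun s hs => prodF_nonneg n t α ht s hs))
      ((measurable_prodF n t α).aestronglyMeasurable),
      LKey α hα hα1 n t ht, ENNReal.toReal_ofReal hnn]
  refine ⟨?_, hsecond⟩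
  have hp : ∀ s : Fin n → ℝ, ((∏ i ∈ Finset.range n, (r + i)) * g t *
      ∏ i ∈ Finset.range n,
        C * α * (tExt n t s i - tExt n t s (i + 1)) ^ (-α) * (tExt n t s i)⁻¹)
      = ((∏ i ∈ Finset.range n, (r + i)) * g t * (C * α) ^ n) *
        ∏ i ∈ Finset.range n,
          (tExt n t s i - tExt n t s (i + 1)) ^ (-α) * (tExt n t s i)⁻¹ := by
    intro s
    have : (∏ i ∈ Finset.range n,
        C * α * (tExt n t s i - tExt n t s (i + 1)) ^ (-α) * (tExt n t s i)⁻¹)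
        = (C * α) ^ n * ∏ i ∈ Finset.range n,
          (tExt n t s i - tExt n t s (i + 1)) ^ (-α) * (tExt n t s i)⁻¹ := by
      calc (∏ i ∈ Finset.range n,
          C * α * (tExt n t s i - tExt n t s (i + 1)) ^ (-α) * (tExt n t s i)⁻¹)
          = ∏ i ∈ Finset.range n, (C * α) *
            ((tExt n t s i - tExt n t s (i + 1)) ^ (-α) * (tExt n t s i)⁻¹) :=
            Finset.prod_congr rfl fun i _ => by ring
        _ = (∏ _i ∈ Finset.range n, (C * α)) * ∏ i ∈ Finset.range n,
            (tExt n t s i - tExt n t s (i + 1)) ^ (-α) * (tExt n t s i)⁻¹ :=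
            Finset.prod_mul_distrib
        _ = _ := by rw [Finset.prod_const, Finset.card_range]
    rw [this]; ring
  calc (∫ s in {s : Fin n → ℝ | ∀ i < n, tExt n t s (i + 1) < tExt n t s i},
        (∏ i ∈ Finset.range n, (r + i)) * g t *
          ∏ i ∈ Finset.range n,
            C * α * (tExt n t s i - tExt n t s (i + 1)) ^ (-α) * (tExt n t s i)⁻¹)
      = ∫ s in {s : Fin n → ℝ | ∀ i < n, tExt n t s (i + 1) < tExt n t s i},
          ((∏ i ∈ Finset.range n, (r + i)) * g t * (C * α) ^ n) *
            ∏ i ∈ Finset.range n,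
              (tExt n t s i - tExt n t s (i + 1)) ^ (-α) * (tExt n t s i)⁻¹ :=
        integral_congr_ae (ae_of_all _ fun s => hp s)
    _ = ((∏ i ∈ Finset.range n, (r + i)) * g t * (C * α) ^ n) *
          ∫ s in {s : Fin n → ℝ | ∀ i < n, tExt n t s (i + 1) < tExt n t s i},
            ∏ i ∈ Finset.range n,
              (tExt n t s i - tExt n t s (i + 1)) ^ (-α) * (tExt n t s i)⁻¹ :=
        MeasureTheory.integral_const_mul _ _
    _ = (∏ i ∈ Finset.range n, (r + i)) * (C * Real.Gamma (1 - α)) ^ n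
          * (Real.Gamma (n * α + 1) / Real.Gamma (n + 1)) * t ^ (-(n * α)) * g t := by
        rw [hsecond]
        have hαn : (α : ℝ) ^ n ≠ 0 := pow_ne_zero n hα.ne'
        field_simp
        ring
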